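/- Let C ∈ 𝔽₂^{ℓ×ℓ} be symmetric with zero diagonal. A matrix P ∈ 𝔽₂^{ℓ×2n} with P Λ Pᵀ = C, where Λ = [[0, I_n],[I_n, 0]], exists if and only if 2n ≥ rank(C). Moreover, when such a P exists, rank(P) ≥ rank(C). -/

import Mathlib

open Matrix

private lemma zmod2_cases (x : ZMod 2) (h : x ≠ 0) : x = 1 := by revert x; decide

private lemma zmod2_two (x : ZMod 2) : x + x = 0 := by revert x; decide

private lemma zmod2_key3 (u v w : ZMod 2) : u + v + w + (v + w) = u := by revert u v w; decide

/-- Core lemma: symplectic Gram–Schmidt, by strong induction on rank. -/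
private lemma core (k : ℕ) : ∀ {ℓ : ℕ} (C : Matrix (Fin ℓ) (Fin ℓ) (ZMod 2)),
    C.rank ≤ k → Cᵀ = C → (∀ i, C i i = 0) →
    ∃ (r : ℕ) (A B : Matrix (Fin ℓ) (Fin r) (ZMod 2)),
      A * Bᵀ + B * Aᵀ = C ∧ 2 * r ≤ C.rank := by
  induction k using Nat.strong_induction_on with
  | _ k IH =>
  intro ℓ C hk hsymm hdiag
  have hCs : ∀ p q, C q p = C p q := fun p q => congrFun (congrFun hsymm p) q
  by_cases hC : C = 0
  · exact ⟨0, 0, 0, by simp [hC], by simp⟩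
  · have hex : ∃ i j, C i j ≠ 0 := by
      by_contra h
      push_neg at h
      exact hC (by ext i j; simpa using h i j)
    obtain ⟨i, j, hij0⟩ := hex
    have hij : C i j = 1 := zmod2_cases _ hij0
    have hji : C j i = 1 := by rw [hCs]; exact hij
    set a : Fin ℓ → ZMod 2 := fun p => C p i with ha
    set b : Fin ℓ → ZMod 2 := fun p => C p j with hb
    have hai : a i = 0 := hdiag i
    have haj : a j = 1 := hji
    have hbi : b i = 1 := hij
    have hbj : b j = 0 := hdiag j
    set C' : Matrix (Fin ℓ) (Fin ℓ) (ZMod 2) :=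
      Matrix.of (fun p q => C p q + a p * b q + b p * a q) with hC'def
    have hC'app : ∀ p q, C' p q = C p q + a p * b q + b p * a q := fun _ _ => rfl
    have hC'symm : C'ᵀ = C' := by
      ext p q
      simp only [transpose_apply, hC'app, hCs]
      ring
    have hC'diag : ∀ p, C' p p = 0 := by
      intro p
      simp only [hC'app, hdiag, zero_add, mul_comm]
      exact zmod2_two _
    have hrowi : ∀ q, C' i q = 0 := by
      intro q
      simp only [hC'app, hai, hbi, zero_mul, one_mul, add_zero]
      rw [show a q = C i q from hCs i q]
      exact zmod2_two _
    have hrowj : ∀ q, C' j q = 0 := by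
      intro q
      simp only [hC'app, haj, hbj, zero_mul, one_mul, add_zero]
      rw [show b q = C j q from hCs j q]
      exact zmod2_two _
    -- key linear-algebra facts
    have hCa : C.mulVec (Pi.single i 1) = a := by
      funext p
      rw [mulVec_single]
      exact mul_one _
    have hCb : C.mulVec (Pi.single j 1) = b := by
      funext p
      rw [mulVec_single]
      exact mul_one _
    have key : ∀ y, C'.mulVec y = C.mulVec y + (b ⬝ᵥ y) • a + (a ⬝ᵥ y) • b := by
      intro y
      funext p
      simp only [Matrix.mulVec, dotProduct, hC'app, add_mul, Finset.sum_add_distrib,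
        Pi.add_apply, Pi.smul_apply, smul_eq_mul, Finset.sum_mul]
      congr 1
      · congr 1
        exact Finset.sum_congr rfl fun l _ => by ring
      · exact Finset.sum_congr rfl fun l _ => by ring
    set U := LinearMap.range C'.mulVecLin with hUdef
    set W := Submodule.span (ZMod 2) ({a, b} : Set (Fin ℓ → ZMod 2)) with hWdef
    have hUle : U ≤ LinearMap.range C.mulVecLin := by
      rintro x ⟨y, rfl⟩
      refine ⟨y + (b ⬝ᵥ y) • (Pi.single i 1 : Fin ℓ → ZMod 2) + (a ⬝ᵥ y) • (Pi.single j 1 : Fin ℓ → ZMod 2), ?_⟩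
      simp only [mulVecLin_apply, mulVec_add, mulVec_smul, hCa, hCb]
      exact (key y).symm
    have hWle : W ≤ LinearMap.range C.mulVecLin := by
      rw [hWdef, Submodule.span_le]
      rintro x hx
      rcases hx with rfl | rfl
      · exact ⟨Pi.single i 1, hCa⟩
      · exact ⟨Pi.single j 1, hCb⟩
    have hdisj : U ⊓ W = ⊥ := by
      rw [eq_bot_iff]
      intro x hx
      obtain ⟨hxU, hxW⟩ := Submodule.mem_inf.mp hx
      obtain ⟨y, rfl⟩ := hxU
      rw [hWdef, Submodule.mem_span_pair] at hxW
      obtain ⟨c, d, hcd⟩ := hxW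
      have hxi : C'.mulVecLin y i = 0 := by
        simp [mulVecLin_apply, Matrix.mulVec, dotProduct, hrowi]
      have hxj : C'.mulVecLin y j = 0 := by
        simp [mulVecLin_apply, Matrix.mulVec, dotProduct, hrowj]
      have hd : d = 0 := by
        have := congrFun hcd i
        simp only [Pi.add_apply, Pi.smul_apply, smul_eq_mul, hai, hbi, mul_zero, mul_one,
          zero_add, hxi] at this
        exact this
      have hc : c = 0 := by
        have := congrFun hcd j
        simp only [Pi.add_apply, Pi.smul_apply, smul_eq_mul, haj, hbj, mul_zero, mul_one,
          add_zero, hxj] at this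
        exact this
      have : C'.mulVecLin y = 0 := by
        rw [← hcd, hc, hd]; simp
      rw [this]
      exact Submodule.zero_mem ⊥
    have hab_li : LinearIndependent (ZMod 2) ![a, b] := by
      rw [linearIndependent_fin2]
      constructor
      · intro h
        have := congrFun h i
        simp only [Matrix.cons_val_one, Matrix.head_cons, Matrix.cons_val_zero, hbi, Pi.zero_apply] at this
        exact one_ne_zero this
      · intro c hc
        have h2 := congrFun hc j
        simp only [Matrix.cons_val_one, Matrix.head_cons, Matrix.cons_val_zero,
          Pi.smul_apply, smul_eq_mul, hbj, haj, mul_zero] at h2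
        exact one_ne_zero h2.symm
    have hrange : Set.range ![a, b] = ({a, b} : Set (Fin ℓ → ZMod 2)) := by
      ext x
      simp [Fin.exists_fin_two, or_comm]
    have hWrank : Module.finrank (ZMod 2) W = 2 := by
      rw [hWdef, ← hrange, finrank_span_eq_card hab_li]
      simp
    have hfin : Module.finrank (ZMod 2) (U ⊔ W : Submodule (ZMod 2) (Fin ℓ → ZMod 2))
        = C'.rank + 2 := by
      have h := Submodule.finrank_sup_add_finrank_inf_eq U W
      rw [hdisj, finrank_bot, add_zero] at h
      rw [h, hWrank, Matrix.rank]
    have hrank2 : C'.rank + 2 ≤ C.rank := by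
      rw [← hfin, Matrix.rank]
      exact Submodule.finrank_mono (sup_le hUle hWle)
    have hlt : C'.rank < k := by omega
    obtain ⟨r', A', B', hAB', hr'⟩ := IH C'.rank hlt C' le_rfl hC'symm hC'diag
    refine ⟨r' + 1, Matrix.of (fun p => Fin.snoc (A' p) (a p)),
      Matrix.of (fun p => Fin.snoc (B' p) (b p)), ?_, by omega⟩
    ext p q
    have h1 := congrFun (congrFun hAB' p) q
    simp only [Matrix.add_apply, Matrix.mul_apply, Matrix.transpose_apply] at h1 ⊢
    rw [Fin.sum_univ_castSucc, Fin.sum_univ_castSucc]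
    simp only [Matrix.of_apply, Fin.snoc_castSucc, Fin.snoc_last]
    rw [hC'app] at h1
    calc ((∑ x : Fin r', A' p x * B' q x) + a p * b q) +
        ((∑ x : Fin r', B' p x * A' q x) + b p * a q)
        = ((∑ x : Fin r', A' p x * B' q x) + (∑ x : Fin r', B' p x * A' q x))
          + (a p * b q + b p * a q) := by ring
      _ = (C p q + a p * b q + b p * a q) + (a p * b q + b p * a q) := by rw [h1]
      _ = C p q := zmod2_key3 _ _ _

private lemma pad {ℓ r n : ℕ} (hr : r ≤ n) (A B : Matrix (Fin ℓ) (Fin r) (ZMod 2)) :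
    (Matrix.of fun p (x : Fin n) => if h : (x : ℕ) < r then A p ⟨x, h⟩ else 0) *
      (Matrix.of fun p (x : Fin n) => if h : (x : ℕ) < r then B p ⟨x, h⟩ else 0)ᵀ
    = A * Bᵀ := by
  ext p q
  simp only [Matrix.mul_apply, Matrix.transpose_apply, Matrix.of_apply]
  set f : ℕ → ZMod 2 := fun m => if h : m < r then A p ⟨m, h⟩ * B q ⟨m, h⟩ else 0 with hf
  have hxy : ∀ x : Fin n,
      (if h : (x : ℕ) < r then A p ⟨x, h⟩ else 0) *
        (if h : (x : ℕ) < r then B q ⟨x, h⟩ else 0) = f x.val := by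
    intro x
    by_cases h : (x : ℕ) < r <;> simp [hf, h]
  rw [Finset.sum_congr rfl fun x _ => hxy x, Fin.sum_univ_eq_sum_range f n,
    ← Finset.sum_subset (Finset.range_subset_range.mpr hr)
      (fun m _ hm => by rw [hf]; exact dif_neg (by simpa using hm)),
    ← Fin.sum_univ_eq_sum_range f r]
  exact Finset.sum_congr rfl fun x _ => by simp [hf]

theorem stmt_17 (ℓ n : ℕ) (C : Matrix (Fin ℓ) (Fin ℓ) (ZMod 2))
    (hsymm : Cᵀ = C) (hdiag : ∀ i, C i i = 0) :
    ((∃ P : Matrix (Fin ℓ) (Fin n ⊕ Fin n) (ZMod 2),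
        P * (Matrix.fromBlocks 0 1 1 0 : Matrix (Fin n ⊕ Fin n) (Fin n ⊕ Fin n) (ZMod 2)) * Pᵀ = C) ↔ C.rank ≤ 2 * n) ∧
    ∀ P : Matrix (Fin ℓ) (Fin n ⊕ Fin n) (ZMod 2),
      P * (Matrix.fromBlocks 0 1 1 0 : Matrix (Fin n ⊕ Fin n) (Fin n ⊕ Fin n) (ZMod 2)) * Pᵀ = C → C.rank ≤ P.rank := by
  have hrankP : ∀ P : Matrix (Fin ℓ) (Fin n ⊕ Fin n) (ZMod 2),
      P * (Matrix.fromBlocks 0 1 1 0 : Matrix (Fin n ⊕ Fin n) (Fin n ⊕ Fin n) (ZMod 2)) * Pᵀ = C → C.rank ≤ P.rank := by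
    intro P hP
    rw [← hP]
    exact le_trans (Matrix.rank_mul_le_right _ _) (le_of_eq (Matrix.rank_transpose P))
  refine ⟨⟨?_, ?_⟩, hrankP⟩
  · rintro ⟨P, hP⟩
    refine le_trans (hrankP P hP) (le_trans (Matrix.rank_le_card_width P) ?_)
    simp [two_mul]
  · intro hrank
    obtain ⟨r, A, B, hAB, h2r⟩ := core C.rank C le_rfl hsymm hdiag
    have hrn : r ≤ n := by omega
    refine ⟨Matrix.fromCols
      (Matrix.of fun p (x : Fin n) => if h : (x : ℕ) < r then A p ⟨x, h⟩ else 0)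
      (Matrix.of fun p (x : Fin n) => if h : (x : ℕ) < r then B p ⟨x, h⟩ else 0), ?_⟩
    rw [Matrix.fromCols_mul_fromBlocks]
    simp only [Matrix.mul_zero, Matrix.mul_one, zero_add, add_zero]
    rw [Matrix.transpose_fromCols, Matrix.fromCols_mul_fromRows, pad hrn, pad hrn,
      add_comm]
    exact hAB
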